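/- In D(A^op), the object B̲_B ⊗^L_B ᵦT_A is quasi-isomorphic to the complex 0 → E(l, m⊕p₃) →g'∗→ E(l, p₂) →(gf')∗→ E(l, p₁) →f∗→ E(l, m) (in homological degrees 3, 2, 1, 0), and its homology is H₀ ≅ C(l,m), H₁ ≅ C(l, Ωm), and Hᵢ = 0 for i ≠ 0, 1. -/

import Mathlib

/-!
Shared framework: a `k`-linear Frobenius category `E` with projective objects `add r`,
its stable category `C = E̲` (realized as the category `SC` below), triangulated-structure
data on `C` (`TriData`), 2-Calabi–Yau via a Serre-duality pairing, rigid/maximal rigid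
objects, and module structures over (stable) endomorphism rings.
-/

namespace Paper

open CategoryTheory Limits

universe v u

variable (E : Type u) [Category.{v} E] [Preadditive E] [HasFiniteBiproducts E] [HasBinaryBiproducts E]

/-- An exact structure (in the sense of Quillen) on an additive category:
a distinguished class of kernel–cokernel pairs (`conflations`) satisfying the usual axioms. -/
structure ExactStr where
  /-- `conf i p` says that `x ⟶ᵢ y ⟶ₚ z` is a conflation. -/
  conf : ∀ ⦃x y z : E⦄, (x ⟶ y) → (y ⟶ z) → Prop
  conf_comp : ∀ ⦃x y z : E⦄ {i : x ⟶ y} {p : y ⟶ z}, conf i p → i ≫ p = 0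
  conf_isKernel : ∀ ⦃x y z : E⦄ {i : x ⟶ y} {p : y ⟶ z} (h : conf i p),
    Nonempty (IsLimit (KernelFork.ofι i (conf_comp h)))
  conf_isCokernel : ∀ ⦃x y z : E⦄ {i : x ⟶ y} {p : y ⟶ z} (h : conf i p),
    Nonempty (IsColimit (CokernelCofork.ofπ p (conf_comp h)))
  conf_split : ∀ x y : E, conf (biprod.inl : x ⟶ x ⊞ y) (biprod.snd : x ⊞ y ⟶ y)
  conf_iso : ∀ ⦃x y z x' y' z' : E⦄ {i : x ⟶ y} {p : y ⟶ z}
    (e₁ : x ≅ x') (e₂ : y ≅ y') (e₃ : z ≅ z'), conf i p →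
    conf (e₁.inv ≫ i ≫ e₂.hom) (e₂.inv ≫ p ≫ e₃.hom)
  defl_comp : ∀ ⦃x y z w v : E⦄ {i : x ⟶ y} {p : y ⟶ z} {j : v ⟶ z} {p' : z ⟶ w},
    conf i p → conf j p' → ∃ (u : E) (i'' : u ⟶ y), conf i'' (p ≫ p')
  infl_comp : ∀ ⦃x y z w v : E⦄ {i : x ⟶ y} {p : y ⟶ v} {i' : y ⟶ z} {p' : z ⟶ w},
    conf i p → conf i' p' → ∃ (u : E) (q : z ⟶ u), conf (i ≫ i') q
  conf_pullback : ∀ ⦃x y z : E⦄ {i : x ⟶ y} {p : y ⟶ z}, conf i p →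
    ∀ ⦃z' : E⦄ (f : z' ⟶ z), ∃ (y' : E) (f' : y' ⟶ y) (p' : y' ⟶ z') (i' : x ⟶ y'),
      conf i' p' ∧ IsPullback f' p' p f
  conf_pushout : ∀ ⦃x y z : E⦄ {i : x ⟶ y} {p : y ⟶ z}, conf i p →
    ∀ ⦃x' : E⦄ (f : x ⟶ x'), ∃ (y' : E) (f' : y ⟶ y') (i' : x' ⟶ y') (p' : y' ⟶ z),
      conf i' p' ∧ IsPushout f i i' f'

variable {E}

namespace ExactStr

variable (S : ExactStr E)

/-- `p` is a deflation (admissible epimorphism). -/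
def IsDeflation {y z : E} (p : y ⟶ z) : Prop := ∃ (x : E) (i : x ⟶ y), S.conf i p

/-- `i` is an inflation (admissible monomorphism). -/
def IsInflation {x y : E} (i : x ⟶ y) : Prop := ∃ (z : E) (p : y ⟶ z), S.conf i p

/-- Projective object relative to the exact structure. -/
def IsProj (P : E) : Prop :=
  ∀ ⦃y z : E⦄ (p : y ⟶ z), S.IsDeflation p → ∀ f : P ⟶ z, ∃ g : P ⟶ y, g ≫ p = f

/-- Injective object relative to the exact structure. -/
def IsInj (I : E) : Prop :=
  ∀ ⦃x y : E⦄ (i : x ⟶ y), S.IsInflation i → ∀ f : x ⟶ I, ∃ g : y ⟶ I, i ≫ g = f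

end ExactStr

/-- `y ∈ add x`: `y` is a direct summand of a finite direct sum of copies of `x`. -/
def InAdd (x y : E) : Prop :=
  ∃ (n : ℕ) (s : y ⟶ ⨁ (fun _ : Fin n => x)) (t : (⨁ fun _ : Fin n => x) ⟶ y), s ≫ t = 𝟙 y

variable (E) in
/-- A Frobenius exact category with projectives `= add r`:
enough projectives and injectives, projectives and injectives coincide,
and the projective objects are exactly the objects of `add r`. -/
structure Frobenius extends ExactStr E where
  enough_proj : ∀ x : E, ∃ (P : E) (p : P ⟶ x), toExactStr.IsProj P ∧ toExactStr.IsDeflation p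
  enough_inj : ∀ x : E, ∃ (I : E) (i : x ⟶ I), toExactStr.IsInj I ∧ toExactStr.IsInflation i
  proj_iff_inj : ∀ P : E, toExactStr.IsProj P ↔ toExactStr.IsInj P
  /-- the projective generator -/
  r : E
  proj_iff_add : ∀ P : E, toExactStr.IsProj P ↔ InAdd r P

namespace Frobenius

variable (k : Type) [Field k] [CategoryTheory.Linear k E]

variable (S : Frobenius E)

/-- An object of `E` is *good* if it is isomorphic in `E` to `x' ⊕ r` for some `x'`. -/
def Good (x : E) : Prop := ∃ x' : E, Nonempty (x ≅ x' ⊞ S.r)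

/-- The `k`-submodule of `x ⟶ y` of morphisms factoring through a projective object. -/
def projIdeal (x y : E) : Submodule k (x ⟶ y) :=
  Submodule.span k {f | ∃ (P : E) (g : x ⟶ P) (h : P ⟶ y), S.IsProj P ∧ f = g ≫ h}

lemma leftComp_projIdeal {x y z : E} (f : x ⟶ y) {g : y ⟶ z}
    (hg : g ∈ S.projIdeal k y z) : f ≫ g ∈ S.projIdeal k x z := by
  have : S.projIdeal k y z ≤ (S.projIdeal k x z).comap (Linear.leftComp k z f) := by
    rw [projIdeal, Submodule.span_le]
    rintro u ⟨P, a, b, hP, rfl⟩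
    exact Submodule.subset_span ⟨P, f ≫ a, b, hP, by simp [Linear.leftComp]⟩
  exact this hg

lemma rightComp_projIdeal {x y z : E} {f : x ⟶ y} (hf : f ∈ S.projIdeal k x y)
    (g : y ⟶ z) : f ≫ g ∈ S.projIdeal k x z := by
  have : S.projIdeal k x y ≤ (S.projIdeal k x z).comap (Linear.rightComp k x g) := by
    rw [projIdeal, Submodule.span_le]
    rintro u ⟨P, a, b, hP, rfl⟩
    exact Submodule.subset_span ⟨P, a, b ≫ g, hP, by simp [Linear.rightComp]⟩
  exact this hf

/-- Hom-spaces of the stable category `C = E̲`. -/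
def SHom (x y : E) : Type _ := (x ⟶ y) ⧸ S.projIdeal k x y

instance (x y : E) : AddCommGroup (S.SHom k x y) :=
  inferInstanceAs (AddCommGroup ((x ⟶ y) ⧸ S.projIdeal k x y))

instance (x y : E) : Module k (S.SHom k x y) :=
  inferInstanceAs (Module k ((x ⟶ y) ⧸ S.projIdeal k x y))

/-- Class of a morphism of `E` in the stable category. -/
def toS {x y : E} (f : x ⟶ y) : S.SHom k x y := Submodule.Quotient.mk f

lemma toS_surjective (x y : E) : Function.Surjective (S.toS k (x := x) (y := y)) :=
  Submodule.Quotient.mk_surjective _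

end Frobenius

/-- The stable category `C = E̲` of the Frobenius category `E`:
same objects, morphisms modulo those factoring through a projective object. -/
def SC (_S : Frobenius E) (k : Type) [Field k] [CategoryTheory.Linear k E] : Type u := E

namespace SC

variable {S : Frobenius E} {k : Type} [Field k] [CategoryTheory.Linear k E]

/-- The canonical identification of objects of `E` with objects of the stable category. -/
abbrev of (S : Frobenius E) (k : Type) [Field k] [CategoryTheory.Linear k E] (x : E) :
    SC S k := x

/-- The object of `E` underlying an object of the stable category. -/
abbrev un (x : SC S k) : E := x

instance : Category (SC S k) where
  Hom x y := S.SHom k x.un y.un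
  id x := S.toS k (𝟙 x.un)
  comp {x y z} f g := by
    refine Quotient.liftOn₂ f g (fun f g => S.toS k (f ≫ g)) ?_
    intro a₁ b₁ a₂ b₂ h₁ h₂
    have h₁' : a₁ - a₂ ∈ S.projIdeal k x.un y.un :=
      (Submodule.Quotient.eq _).mp (Quotient.sound h₁)
    have h₂' : b₁ - b₂ ∈ S.projIdeal k y.un z.un :=
      (Submodule.Quotient.eq _).mp (Quotient.sound h₂)
    show S.toS k (a₁ ≫ b₁) = S.toS k (a₂ ≫ b₂)
    unfold Frobenius.toS
    refine (Submodule.Quotient.eq (S.projIdeal k x.un z.un)).mpr ?_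
    have h : a₁ ≫ b₁ - a₂ ≫ b₂ = a₁ ≫ (b₁ - b₂) + (a₁ - a₂) ≫ b₂ := by
      simp only [Preadditive.comp_sub, Preadditive.sub_comp]; abel
    rw [h]
    exact add_mem (S.leftComp_projIdeal k _ h₂') (S.rightComp_projIdeal k h₁' _)
  id_comp {x y} f := by
    obtain ⟨f, rfl⟩ := S.toS_surjective k _ _ f
    show S.toS k (𝟙 _ ≫ f) = S.toS k f
    rw [Category.id_comp]
  comp_id {x y} f := by
    obtain ⟨f, rfl⟩ := S.toS_surjective k _ _ f
    show S.toS k (f ≫ 𝟙 _) = S.toS k f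
    rw [Category.comp_id]
  assoc {w x y z} f g h := by
    obtain ⟨f, rfl⟩ := S.toS_surjective k _ _ f
    obtain ⟨g, rfl⟩ := S.toS_surjective k _ _ g
    obtain ⟨h, rfl⟩ := S.toS_surjective k _ _ h
    show S.toS k ((f ≫ g) ≫ h) = S.toS k (f ≫ (g ≫ h))
    rw [Category.assoc]

/-- The canonical functor map on morphisms: the class in the stable category of a
morphism of `E`, seen as a morphism of `SC S k`. -/
def toSC (S : Frobenius E) (k : Type) [Field k] [CategoryTheory.Linear k E]
    {x y : E} (f : x ⟶ y) : SC.of S k x ⟶ SC.of S k y := S.toS k f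

lemma toSC_comp {x y z : E} (f : x ⟶ y) (g : y ⟶ z) :
    toSC S k f ≫ toSC S k g = toSC S k (f ≫ g) := rfl

lemma toSC_surjective (x y : E) :
    Function.Surjective (toSC S k (x := x) (y := y)) :=
  Submodule.Quotient.mk_surjective _

instance : Preadditive (SC S k) where
  homGroup x y := inferInstanceAs (AddCommGroup (S.SHom k x.un y.un))
  add_comp x y z f f' g := by
    obtain ⟨f, rfl⟩ := S.toS_surjective k _ _ f
    obtain ⟨f', rfl⟩ := S.toS_surjective k _ _ f'
    obtain ⟨g, rfl⟩ := S.toS_surjective k _ _ g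
    show S.toS k ((f + f') ≫ g) = S.toS k (f ≫ g) + S.toS k (f' ≫ g)
    rw [Preadditive.add_comp]; rfl
  comp_add x y z f g g' := by
    obtain ⟨f, rfl⟩ := S.toS_surjective k _ _ f
    obtain ⟨g, rfl⟩ := S.toS_surjective k _ _ g
    obtain ⟨g', rfl⟩ := S.toS_surjective k _ _ g'
    show S.toS k (f ≫ (g + g')) = S.toS k (f ≫ g) + S.toS k (f ≫ g')
    rw [Preadditive.comp_add]; rfl

instance : CategoryTheory.Linear k (SC S k) where
  homModule x y := inferInstanceAs (Module k (S.SHom k x.un y.un))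
  smul_comp x y z r f g := by
    obtain ⟨f, rfl⟩ := S.toS_surjective k _ _ f
    obtain ⟨g, rfl⟩ := S.toS_surjective k _ _ g
    show S.toS k ((r • f) ≫ g) = r • S.toS k (f ≫ g)
    rw [Linear.smul_comp]; rfl
  comp_smul x y z f r g := by
    obtain ⟨f, rfl⟩ := S.toS_surjective k _ _ f
    obtain ⟨g, rfl⟩ := S.toS_surjective k _ _ g
    show S.toS k (f ≫ (r • g)) = r • S.toS k (f ≫ g)
    rw [Linear.comp_smul]; rfl

end SC

end Paper

section EndModules

namespace Paper

open CategoryTheory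

/-- In any preadditive category, `x ⟶ y` is a right module over `End x`
(i.e. a left module over `(End x)ᵐᵒᵖ`), acting by precomposition. -/
instance moduleEndLeftOp {C : Type*} [Category C] [Preadditive C] {x y : C} :
    Module (End x)ᵐᵒᵖ (x ⟶ y) where
  smul a f := a.unop ≫ f
  one_smul f := Category.id_comp f
  mul_smul a b f := by
    show (MulOpposite.unop a ≫ MulOpposite.unop b) ≫ f =
      MulOpposite.unop a ≫ MulOpposite.unop b ≫ f
    rw [Category.assoc]
  smul_zero a := Limits.comp_zero
  smul_add a f g := Preadditive.comp_add _ _ _ _ _ _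
  add_smul a b f := Preadditive.add_comp _ _ _ _ _ _
  zero_smul f := Limits.zero_comp

lemma op_smul_def {C : Type*} [Category C] [Preadditive C] {x y : C}
    (a : (End x)ᵐᵒᵖ) (f : x ⟶ y) : a • f = a.unop ≫ f := rfl

lemma end_smul_def {C : Type*} [Category C] [Preadditive C] {x y : C}
    (a : End y) (f : x ⟶ y) : a • f = f ≫ a := rfl

/-- Postcomposition as a map of right `End x`-modules. -/
def postcompL {C : Type*} [Category C] [Preadditive C] {x y z : C} (f : y ⟶ z) :
    (x ⟶ y) →ₗ[(End x)ᵐᵒᵖ] (x ⟶ z) where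
  toFun g := g ≫ f
  map_add' g g' := Preadditive.add_comp _ _ _ _ _ _
  map_smul' a g := by
    show (a.unop ≫ g) ≫ f = a.unop ≫ g ≫ f
    rw [Category.assoc]

/-- Precomposition as a map of left `End z`-modules. -/
def precompL {C : Type*} [Category C] [Preadditive C] {x y z : C} (f : x ⟶ y) :
    (y ⟶ z) →ₗ[End z] (x ⟶ z) where
  toFun g := f ≫ g
  map_add' g g' := Preadditive.comp_add _ _ _ _ _ _
  map_smul' a g := by
    show f ≫ g ≫ a = (f ≫ g) ≫ a
    rw [Category.assoc]

end Paper

end EndModules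

namespace Paper

open CategoryTheory Limits

section Tri

variable {E : Type u} [Category.{v} E] [Preadditive E] [HasFiniteBiproducts E]
  [HasBinaryBiproducts E]

/-- The data and axioms of the triangulated structure on the stable category `C = SC S k`
of the Frobenius category `E` (suspension `Σ`, distinguished triangles), together with the
assumptions that `C` is 2-Calabi–Yau (formulated via a nondegenerate associative Serre
pairing `C(x,y) × C(y,Σ²x) → k`, functorial in both variables), Hom-finite over `k`, and
has split idempotents. -/
structure TriData (S : Frobenius E) (k : Type) [Field k] [CategoryTheory.Linear k E] where
  /-- the suspension functor -/
  susp : SC S k ⥤ SC S k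
  equiv : susp.IsEquivalence
  additive : susp.Additive
  linear : Functor.Linear k susp
  /-- distinguished triangles `x ⟶ y ⟶ z ⟶ Σ x` -/
  dtri : ∀ ⦃x y z : SC S k⦄, (x ⟶ y) → (y ⟶ z) → (z ⟶ susp.obj x) → Prop
  dtri_comp_zero : ∀ ⦃x y z : SC S k⦄ {f : x ⟶ y} {g : y ⟶ z} {h : z ⟶ susp.obj x},
    dtri f g h → f ≫ g = 0
  dtri_rot : ∀ ⦃x y z : SC S k⦄ {f : x ⟶ y} {g : y ⟶ z} {h : z ⟶ susp.obj x},
    dtri f g h → dtri g h (-(susp.map f))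
  dtri_complete : ∀ ⦃x y : SC S k⦄ (f : x ⟶ y),
    ∃ (z : SC S k) (g : y ⟶ z) (h : z ⟶ susp.obj x), dtri f g h
  dtri_ext : ∀ ⦃x y z x' y' z' : SC S k⦄
    {f : x ⟶ y} {g : y ⟶ z} {h : z ⟶ susp.obj x}
    {f' : x' ⟶ y'} {g' : y' ⟶ z'} {h' : z' ⟶ susp.obj x'},
    dtri f g h → dtri f' g' h' → ∀ (a : x ⟶ x') (b : y ⟶ y'), f ≫ b = a ≫ f' →
      ∃ c : z ⟶ z', g ≫ c = b ≫ g' ∧ h ≫ susp.map a = c ≫ h'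
  /-- conflations of `E` induce distinguished triangles in the stable category -/
  conf_dtri : ∀ ⦃x y z : E⦄ {i : x ⟶ y} {p : y ⟶ z}, S.conf i p →
    ∃ h : SC.of S k z ⟶ susp.obj (SC.of S k x), dtri (SC.toSC S k i) (SC.toSC S k p) h
  /-- the 2-Calabi–Yau (Serre duality) pairing `C(x,y) ⊗ C(y,Σ²x) → k` -/
  pair : ∀ (x y : SC S k), (x ⟶ y) →ₗ[k] (y ⟶ susp.obj (susp.obj x)) →ₗ[k] k
  pair_assoc : ∀ ⦃x y z : SC S k⦄ (f : x ⟶ y) (g : y ⟶ z)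
    (h : z ⟶ susp.obj (susp.obj x)), pair x z (f ≫ g) h = pair x y f (g ≫ h)
  pair_nondeg_left : ∀ ⦃x y : SC S k⦄ (f : x ⟶ y), (∀ g, pair x y f g = 0) → f = 0
  pair_nondeg_right : ∀ ⦃x y : SC S k⦄ (g : y ⟶ susp.obj (susp.obj x)),
    (∀ f, pair x y f g = 0) → g = 0
  /-- `C` is Hom-finite -/
  homFinite : ∀ x y : SC S k, FiniteDimensional k (x ⟶ y)
  /-- `C` has split idempotents -/
  idem : IsIdempotentComplete (SC S k)

namespace TriData

variable {k : Type} [Field k] [CategoryTheory.Linear k E] {S : Frobenius E}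
variable (T : TriData S k)

/-- `x` is rigid: `C(x, Σx) = 0`. -/
def Rigid (x : SC S k) : Prop := ∀ f : x ⟶ T.susp.obj x, f = 0

/-- `y ∈ add x` in the stable category. -/
def AddSummand (_T : TriData S k) (x y : SC S k) : Prop :=
  ∃ (n : ℕ) (s : y ⟶ SC.of S k (⨁ fun _ : Fin n => x.un))
    (t : SC.of S k (⨁ fun _ : Fin n => x.un) ⟶ y), s ≫ t = 𝟙 y

/-- `x` is maximal rigid: it is rigid and `C(x ⊕ y, Σ(x ⊕ y)) = 0` implies `y ∈ add x`
(formulated componentwise). -/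
def MaxRigid (x : SC S k) : Prop :=
  T.Rigid x ∧ ∀ y : SC S k, T.Rigid y → (∀ f : x ⟶ T.susp.obj y, f = 0) →
    (∀ f : y ⟶ T.susp.obj x, f = 0) → T.AddSummand x y

/-- `Σ² x ≅ x` in the stable category. -/
def SuspSqFix (x : SC S k) : Prop := Nonempty (T.susp.obj (T.susp.obj x) ≅ x)

end TriData

end Tri

/-- A ring is self-injective if it is injective as a (left) module over itself. -/
def IsSelfInjectiveRing (A : Type*) [Ring A] : Prop := Module.Injective A A

end Paper

namespace Paper

open CategoryTheory Limits

noncomputable section ATensor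

set_option linter.unusedSectionVars false

variable (k : Type*) [CommRing k]
variable (A : Type*) [Ring A] [Algebra k A]
variable (M : Type*) [AddCommGroup M] [Module k M] [Module Aᵐᵒᵖ M]
variable (N : Type*) [AddCommGroup N] [Module k N] [Module A N]

/-- The relations defining the tensor product `M ⊗_A N` of a right `A`-module and a
left `A`-module over the (possibly noncommutative) `k`-algebra `A`, as a quotient of
`M ⊗_k N`. -/
def atensorRel : Submodule k (TensorProduct k M N) :=
  Submodule.span k {t | ∃ (m : M) (a : A) (n : N),
    t = (MulOpposite.op a • m) ⊗ₜ[k] n - m ⊗ₜ[k] (a • n)}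

/-- The tensor product `M ⊗_A N` of a right `A`-module and a left `A`-module over the
(possibly noncommutative) `k`-algebra `A`. -/
def ATensor : Type _ := TensorProduct k M N ⧸ atensorRel k A M N

instance : AddCommGroup (ATensor k A M N) :=
  inferInstanceAs (AddCommGroup (TensorProduct k M N ⧸ atensorRel k A M N))

instance : Module k (ATensor k A M N) :=
  inferInstanceAs (Module k (TensorProduct k M N ⧸ atensorRel k A M N))

namespace ATensor

/-- The canonical balanced bilinear map `M × N → M ⊗_A N`. -/
def mkBilin : M →ₗ[k] N →ₗ[k] ATensor k A M N :=
  (TensorProduct.mk k M N).compr₂ (atensorRel k A M N).mkQ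

/-- `m ⊗ n` in `M ⊗_A N`. -/
def mk (m : M) (n : N) : ATensor k A M N := mkBilin k A M N m n

variable {k A M N}

lemma mk_smul (m : M) (a : A) (n : N) :
    mk k A M N (MulOpposite.op a • m) n = mk k A M N m (a • n) := by
  unfold mk mkBilin
  show Submodule.Quotient.mk _ = Submodule.Quotient.mk _
  rw [Submodule.Quotient.eq]
  exact Submodule.subset_span ⟨m, a, n, rfl⟩

lemma mk_surjective_span (t : ATensor k A M N) :
    ∃ s : TensorProduct k M N, Submodule.Quotient.mk s = t :=
  Submodule.Quotient.mk_surjective _ t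

variable {P : Type*} [AddCommGroup P] [Module k P]

/-- Lift a balanced `k`-bilinear map to the tensor product `M ⊗_A N`. -/
def lift (φ : M →ₗ[k] N →ₗ[k] P)
    (bal : ∀ (m : M) (a : A) (n : N), φ (MulOpposite.op a • m) n = φ m (a • n)) :
    ATensor k A M N →ₗ[k] P := by
  refine Submodule.liftQ _ (TensorProduct.lift φ) ?_
  rw [atensorRel, Submodule.span_le]
  rintro t ⟨m, a, n, rfl⟩
  simp only [SetLike.mem_coe, LinearMap.mem_ker, map_sub, TensorProduct.lift.tmul]
  rw [bal m a n, sub_self]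

@[simp] lemma lift_mk (φ : M →ₗ[k] N →ₗ[k] P) (bal) (m : M) (n : N) :
    lift φ bal (mk k A M N m n) = φ m n := rfl

lemma hom_ext {f g : ATensor k A M N →ₗ[k] P}
    (h : ∀ m n, f (mk k A M N m n) = g (mk k A M N m n)) : f = g := by
  apply Submodule.linearMap_qext
  apply TensorProduct.ext'
  intro m n
  exact h m n

variable {M' : Type*} [AddCommGroup M'] [Module k M'] [Module Aᵐᵒᵖ M']
variable {N' : Type*} [AddCommGroup N'] [Module k N'] [Module A N']

/-- Functoriality of `M ⊗_A N` in the right `A`-module variable. -/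
def mapLeft (f : M →ₗ[k] M') (hf : ∀ (a : A) (m : M),
    f (MulOpposite.op a • m) = MulOpposite.op a • f m) :
    ATensor k A M N →ₗ[k] ATensor k A M' N :=
  lift ((mkBilin k A M' N).comp f) (by
    intro m a n
    simp only [LinearMap.comp_apply, hf]
    exact mk_smul _ _ _)

/-- Functoriality of `M ⊗_A N` in the left `A`-module variable. -/
def mapRight (g : N →ₗ[k] N') (hg : ∀ (a : A) (n : N), g (a • n) = a • g n) :
    ATensor k A M N →ₗ[k] ATensor k A M N' :=
  lift ((mkBilin k A M N').compl₂ g) (by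
    intro m a n
    simp only [LinearMap.compl₂_apply, hg]
    exact mk_smul _ _ _)

@[simp] lemma mapLeft_mk (f : M →ₗ[k] M') (hf) (m : M) (n : N) :
    mapLeft (N := N) f hf (mk k A M N m n) = mk k A M' N (f m) n := rfl

@[simp] lemma mapRight_mk (g : N →ₗ[k] N') (hg) (m : M) (n : N) :
    mapRight (M := M) g hg (mk k A M N m n) = mk k A M N' m (g n) := rfl

end ATensor

end ATensor

end Paper

namespace Paper

open CategoryTheory Limits

section StableModules

variable {E : Type u} [Category.{v} E] [Preadditive E] [HasFiniteBiproducts E]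
  [HasBinaryBiproducts E]
variable (k : Type) [Field k] [CategoryTheory.Linear k E]
variable (S : Frobenius E)

namespace Frobenius

/-- Precomposition on stable Hom spaces. -/
def preS {x' x y : E} (a : x' ⟶ x) : S.SHom k x y →ₗ[k] S.SHom k x' y :=
  Submodule.mapQ _ _ (Linear.leftComp k y a)
    (fun f hf => S.leftComp_projIdeal k a hf)

/-- Postcomposition on stable Hom spaces. -/
def postS {x y y' : E} (b : y ⟶ y') : S.SHom k x y →ₗ[k] S.SHom k x y' :=
  Submodule.mapQ _ _ (Linear.rightComp k x b)
    (fun f hf => S.rightComp_projIdeal k hf b)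

@[simp] lemma preS_toS {x' x y : E} (a : x' ⟶ x) (f : x ⟶ y) :
    S.preS k a (S.toS k f) = S.toS k (a ≫ f) := rfl

@[simp] lemma postS_toS {x y y' : E} (b : y ⟶ y') (f : x ⟶ y) :
    S.postS k b (S.toS k f) = S.toS k (f ≫ b) := rfl

/-- `C(x,y)` is a right `E(x,x)`-module. -/
instance shomModuleOp (x y : E) : Module (End x)ᵐᵒᵖ (S.SHom k x y) where
  smul a u := S.preS k a.unop u
  one_smul u := by
    obtain ⟨f, rfl⟩ := S.toS_surjective k _ _ u
    show S.toS k ((𝟙 x : End x) ≫ f) = S.toS k f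
    rw [Category.id_comp]
  mul_smul a b u := by
    obtain ⟨f, rfl⟩ := S.toS_surjective k _ _ u
    show S.toS k ((MulOpposite.unop a ≫ MulOpposite.unop b) ≫ f)
      = S.toS k (MulOpposite.unop a ≫ MulOpposite.unop b ≫ f)
    rw [Category.assoc]
  smul_zero a := map_zero _
  smul_add a u v := map_add _ _ _
  add_smul a b u := by
    obtain ⟨f, rfl⟩ := S.toS_surjective k _ _ u
    show S.toS k ((MulOpposite.unop a + MulOpposite.unop b) ≫ f)
      = S.toS k (MulOpposite.unop a ≫ f) + S.toS k (MulOpposite.unop b ≫ f)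
    rw [Preadditive.add_comp]
    rfl
  zero_smul u := by
    obtain ⟨f, rfl⟩ := S.toS_surjective k _ _ u
    show S.toS k ((0 : x ⟶ x) ≫ f) = 0
    rw [Limits.zero_comp]
    rfl

lemma shom_op_smul_def {x y : E} (a : (End x)ᵐᵒᵖ) (u : S.SHom k x y) :
    a • u = S.preS k a.unop u := rfl

/-- `C(x,y)` is a left `E(y,y)`-module (with the `End`-multiplication convention
`a * b = b ≫ a`, so the action is by postcomposition). -/
instance shomModuleEnd (x y : E) : Module (End y) (S.SHom k x y) where
  smul b u := S.postS k b u
  one_smul u := by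
    obtain ⟨f, rfl⟩ := S.toS_surjective k _ _ u
    show S.toS k (f ≫ (𝟙 y : End y)) = S.toS k f
    rw [Category.comp_id]
  mul_smul a b u := by
    obtain ⟨f, rfl⟩ := S.toS_surjective k _ _ u
    show S.toS k (f ≫ (b ≫ a)) = S.toS k ((f ≫ b) ≫ a)
    rw [Category.assoc]
  smul_zero a := map_zero _
  smul_add a u v := map_add _ _ _
  add_smul a b u := by
    obtain ⟨f, rfl⟩ := S.toS_surjective k _ _ u
    show S.toS k (f ≫ (a + b)) = S.toS k (f ≫ a) + S.toS k (f ≫ b)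
    rw [Preadditive.comp_add]
    rfl
  zero_smul u := by
    obtain ⟨f, rfl⟩ := S.toS_surjective k _ _ u
    show S.toS k (f ≫ (0 : y ⟶ y)) = 0
    rw [Limits.comp_zero]
    rfl

lemma shom_end_smul_def {x y : E} (b : End y) (u : S.SHom k x y) :
    b • u = S.postS k b u := rfl

end Frobenius

end StableModules

section TensorFunctor

variable (A : Type v) [Ring A]
variable (M : Type v) [AddCommGroup M] [Module Aᵐᵒᵖ M]

/-- The functor `M ⊗_A — : A-Mod ⥤ Ab` (realized with `ℤ`-coefficients),
for a right `A`-module `M`. -/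
noncomputable def atensorFunctor : ModuleCat.{v} A ⥤ ModuleCat.{v} ℤ where
  obj N := ModuleCat.of ℤ (ATensor ℤ A M N)
  map {N N'} g := ModuleCat.ofHom (ATensor.mapRight (M := M) (g.hom.toAddMonoidHom.toIntLinearMap)
    (fun a n => map_smul g.hom a n))
  map_id N := by
    apply ModuleCat.hom_ext
    apply ATensor.hom_ext
    intro m n
    rfl
  map_comp {N N' N''} g h := by
    apply ModuleCat.hom_ext
    apply ATensor.hom_ext
    intro m n
    rfl

noncomputable instance : (atensorFunctor.{v} A M).Additive where
  map_add := by
    intros N N' g h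
    apply ModuleCat.hom_ext
    apply ATensor.hom_ext
    intro m n
    show ATensor.mk ℤ A M _ m ((g.hom + h.hom) n) =
      ATensor.mk ℤ A M _ m (g.hom n) + ATensor.mk ℤ A M _ m (h.hom n)
    rw [LinearMap.add_apply]
    exact map_add (ATensor.mkBilin ℤ A M _ m) _ _

end TensorFunctor

end Paper

namespace Paper

open CategoryTheory Limits

section TwoTerm

universe w

variable {R : Type w} [Ring R]

/-- The `ℕ`-indexed chain complex `⋯ → 0 → M → N` (with `M` in homological degree 1 and
`N` in degree 0) associated to a morphism `f : M ⟶ N` of modules. -/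
noncomputable def twoTermChain {M N : ModuleCat.{w} R} (f : M ⟶ N) :
    ChainComplex (ModuleCat.{w} R) ℕ :=
  ChainComplex.of
    (fun n => match n with
      | 0 => N
      | 1 => M
      | _ + 2 => ModuleCat.of R PUnit)
    (fun n => match n with
      | 0 => f
      | _ + 1 => 0)
    (fun n => Limits.zero_comp)

/-- The two-term complex of a morphism `f : M ⟶ N`, as a `ℤ`-indexed cochain complex
concentrated in cohomological degrees `-1, 0` (i.e. homological degrees `1, 0`). -/
noncomputable def twoTermCochainZ {M N : ModuleCat.{w} R} (f : M ⟶ N) :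
    CochainComplex (ModuleCat.{w} R) ℤ :=
  ((ComplexShape.embeddingUpIntLE (0 : ℤ)).extendFunctor (ModuleCat.{w} R)).obj
    (twoTermChain f)

end TwoTerm

section Thick

variable {K : Type*} [Category K] [Preadditive K] [HasZeroObject K] [HasShift K ℤ]
  [∀ n : ℤ, (CategoryTheory.shiftFunctor K n).Additive] [Pretriangulated K]

/-- `IsThickMember G X`: `X` belongs to the thick closure of `add G`, i.e. to the
smallest triangulated subcategory of `K` containing `G` and closed under direct
summands. -/
inductive IsThickMember (G : K) : K → Prop
  | base : IsThickMember G G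
  | of_iso {X Y : K} : Nonempty (X ≅ Y) → IsThickMember G X → IsThickMember G Y
  | zero {Z : K} : Limits.IsZero Z → IsThickMember G Z
  | shift {X : K} (n : ℤ) : IsThickMember G X → IsThickMember G (X⟦n⟧)
  | cone {T : Pretriangulated.Triangle K} (hT : T ∈ distTriang K) :
      IsThickMember G T.obj₁ → IsThickMember G T.obj₂ → IsThickMember G T.obj₃
  | summand {X Y : K} (s : Y ⟶ X) (r : X ⟶ Y) :
      s ≫ r = 𝟙 Y → IsThickMember G X → IsThickMember G Y

end Thick

end Paper

namespace Paper

open CategoryTheory Limits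

section TensorFunctorL

variable (A : Type v) [Ring A]
variable (N : Type v) [AddCommGroup N] [Module A N]

/-- The functor `— ⊗_A N : Mod-A ⥤ Ab` (realized with `ℤ`-coefficients),
for a left `A`-module `N`. -/
noncomputable def atensorFunctorL : ModuleCat.{v} Aᵐᵒᵖ ⥤ ModuleCat.{v} ℤ where
  obj M := ModuleCat.of ℤ (ATensor ℤ A M N)
  map {M M'} g := ModuleCat.ofHom (ATensor.mapLeft (N := N) (g.hom.toAddMonoidHom.toIntLinearMap)
    (fun a m => map_smul g.hom (MulOpposite.op a) m))
  map_id M := by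
    apply ModuleCat.hom_ext
    apply ATensor.hom_ext
    intro m n
    rfl
  map_comp {M M' M''} g h := by
    apply ModuleCat.hom_ext
    apply ATensor.hom_ext
    intro m n
    rfl

noncomputable instance : (atensorFunctorL.{v} A N).Additive where
  map_add := by
    intros M M' g h
    apply ModuleCat.hom_ext
    apply ATensor.hom_ext
    intro m n
    show ATensor.mk ℤ A _ N ((g.hom + h.hom) m) n =
      ATensor.mk ℤ A _ N (g.hom m) n + ATensor.mk ℤ A _ N (h.hom m) n
    rw [LinearMap.add_apply]
    show ATensor.mkBilin ℤ A M' N (g.hom m + h.hom m) n =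
      ATensor.mkBilin ℤ A M' N (g.hom m) n + ATensor.mkBilin ℤ A M' N (h.hom m) n
    rw [map_add, LinearMap.add_apply]

end TensorFunctorL

end Paper

set_option linter.unusedSectionVars false

namespace Paper

open CategoryTheory Limits

universe v' u'

variable {E : Type u'} [Category.{v'} E] [Preadditive E] [HasFiniteBiproducts E]
  [HasBinaryBiproducts E]

/-- The four-term chain complex `0 → E(w, m⊞p₃) → E(w,p₂) → E(w,p₁) → E(w,m)`
(homological degrees 3, 2, 1, 0) of right `E(w,w)`-modules obtained by applying
`E(w,−)` to the splice of the conflations `0 → Ωm → p₁ → m → 0` and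
`0 → m⊞p₃ → p₂ → Ωm → 0`. -/
noncomputable def fourTermComplex (w : E) {m Ωm p₁ p₂ p₃ : E}
    (g : Ωm ⟶ p₁) (f : p₁ ⟶ m) (g' : m ⊞ p₃ ⟶ p₂) (f' : p₂ ⟶ Ωm)
    (h1 : g ≫ f = 0) (h2 : g' ≫ f' = 0) :
    ChainComplex (ModuleCat.{v'} ((End w)ᵐᵒᵖ)) ℕ :=
  ChainComplex.of
    (fun n => match n with
      | 0 => ModuleCat.of _ (w ⟶ m)
      | 1 => ModuleCat.of _ (w ⟶ p₁)
      | 2 => ModuleCat.of _ (w ⟶ p₂)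
      | 3 => ModuleCat.of _ (w ⟶ m ⊞ p₃)
      | _ + 4 => ModuleCat.of _ PUnit)
    (fun n => match n with
      | 0 => ModuleCat.ofHom (postcompL f)
      | 1 => ModuleCat.ofHom (postcompL (f' ≫ g))
      | 2 => ModuleCat.ofHom (postcompL g')
      | _ + 3 => 0)
    (fun n => match n with
      | 0 => by
          ext u
          show (u ≫ (f' ≫ g)) ≫ f = (0 : _ →ₗ[(End w)ᵐᵒᵖ] _) u
          have e : (u ≫ (f' ≫ g)) ≫ f = u ≫ f' ≫ (g ≫ f) := by
            simp only [Category.assoc]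
          rw [e, h1, Limits.comp_zero, Limits.comp_zero]
          rfl
      | 1 => by
          ext u
          show (u ≫ g') ≫ (f' ≫ g) = (0 : _ →ₗ[(End w)ᵐᵒᵖ] _) u
          have e : (u ≫ g') ≫ (f' ≫ g) = u ≫ (g' ≫ f') ≫ g := by
            simp only [Category.assoc]
          rw [e, h2, Limits.zero_comp, Limits.comp_zero]
          rfl
      | _ + 2 => Limits.zero_comp)

end Paper

namespace Paper

open CategoryTheory Limits

section Statement11Aux

universe w₁ w₂

variable {E : Type w₂} [Category.{w₁} E] [Preadditive E] [HasFiniteBiproducts E]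
  [HasBinaryBiproducts E]

/-- Any two elements of `M ⊗_A N` are equal when `M` is a subsingleton. -/
lemma ATensor.eq_of_subsingleton {kk : Type*} [CommRing kk] {A : Type*} [Ring A] [Algebra kk A]
    {M : Type*} [AddCommGroup M] [Module kk M] [Module Aᵐᵒᵖ M]
    {N : Type*} [AddCommGroup N] [Module kk N] [Module A N]
    (hM : ∀ a b : M, a = b) (x y : ATensor kk A M N) : x = y := by
  haveI : Subsingleton M := ⟨hM⟩
  have hT : ∀ c : TensorProduct kk M N, c = 0 := by
    intro c
    induction c using TensorProduct.induction_on with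
    | zero => rfl
    | tmul p q => rw [Subsingleton.elim p (0 : M), TensorProduct.zero_tmul]
    | add a b ha hb => rw [ha, hb, add_zero]
  obtain ⟨s, rfl⟩ := ATensor.mk_surjective_span x
  obtain ⟨t, rfl⟩ := ATensor.mk_surjective_span y
  rw [hT s, hT t]

/-- An isomorphism in `ModuleCat` between two modules all of whose elements are equal. -/
noncomputable def modSubsingletonIso {R : Type*} [Ring R] {M N : ModuleCat R}
    (hM : ∀ a b : M, a = b) (hN : ∀ a b : N, a = b) : M ≅ N where
  hom := 0
  inv := 0
  hom_inv_id := by ext x; exact hM _ _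
  inv_hom_id := by ext x; exact hN _ _

variable (l m : E)

/-- The canonical map `E(m,x) ⊗_{E(m,m)} E(l,m) → E(l,x)`, `u ⊗ t ↦ t ≫ u`. -/
noncomputable def tmu (x : E) :
    ATensor ℤ (End m) (m ⟶ x) (l ⟶ m) →ₗ[ℤ] (l ⟶ x) :=
  ATensor.lift
    { toFun := fun u =>
        { toFun := fun t => t ≫ u
          map_add' := fun t t' => by rw [Preadditive.add_comp]
          map_smul' := fun c t => by rw [RingHom.id_apply, Preadditive.zsmul_comp] }
      map_add' := fun u u' => by
        ext t
        show t ≫ (u + u') = t ≫ u + t ≫ u'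
        rw [Preadditive.comp_add]
      map_smul' := fun c u => by
        ext t
        show t ≫ (c • u) = c • (t ≫ u)
        rw [Preadditive.comp_zsmul] }
    (fun u a t => by
      show t ≫ (a ≫ u) = (t ≫ a) ≫ u
      rw [Category.assoc])

lemma tmu_mk (x : E) (u : m ⟶ x) (t : l ⟶ m) :
    tmu l m x (ATensor.mk ℤ (End m) (m ⟶ x) (l ⟶ m) u t) = t ≫ u := rfl

/-- The inverse map, built from a presentation of `x` as a direct summand of `m^n`. -/
noncomputable def tnu (x : E) {n : ℕ} (a : Fin n → (x ⟶ m)) (b : Fin n → (m ⟶ x)) :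
    (l ⟶ x) →ₗ[ℤ] ATensor ℤ (End m) (m ⟶ x) (l ⟶ m) where
  toFun h := ∑ j, ATensor.mk ℤ (End m) (m ⟶ x) (l ⟶ m) (b j) (h ≫ a j)
  map_add' h h' := by
    rw [← Finset.sum_add_distrib]
    refine Finset.sum_congr rfl fun j _ => ?_
    rw [Preadditive.add_comp]
    exact map_add (ATensor.mkBilin ℤ (End m) (m ⟶ x) (l ⟶ m) (b j)) _ _
  map_smul' c h := by
    rw [RingHom.id_apply, Finset.smul_sum]
    refine Finset.sum_congr rfl fun j _ => ?_
    rw [Preadditive.zsmul_comp]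
    exact map_smul (ATensor.mkBilin ℤ (End m) (m ⟶ x) (l ⟶ m) (b j)) c _

lemma tmu_tnu (x : E) {n : ℕ} (a : Fin n → (x ⟶ m)) (b : Fin n → (m ⟶ x))
    (hs : ∑ j, a j ≫ b j = 𝟙 x) (h : l ⟶ x) :
    tmu l m x (tnu l m x a b h) = h := by
  show tmu l m x (∑ j, ATensor.mk ℤ (End m) (m ⟶ x) (l ⟶ m) (b j) (h ≫ a j)) = h
  rw [map_sum]
  have step : ∀ j ∈ Finset.univ,
      tmu l m x (ATensor.mk ℤ (End m) (m ⟶ x) (l ⟶ m) (b j) (h ≫ a j))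
        = h ≫ (a j ≫ b j) := by
    intro j _
    rw [tmu_mk, Category.assoc]
  rw [Finset.sum_congr rfl step, ← Preadditive.comp_sum, hs, Category.comp_id]

instance {kk : Type*} [CommRing kk] {A : Type*} [Ring A] [Algebra kk A]
    {M : Type*} [AddCommGroup M] [Module kk M] [Module Aᵐᵒᵖ M]
    {N : Type*} [AddCommGroup N] [Module kk N] [Module A N] :
    SMulCommClass kk kk (ATensor kk A M N) :=
  inferInstanceAs (SMulCommClass kk kk (TensorProduct kk M N ⧸ atensorRel kk A M N))

lemma tnu_tmu (x : E) {n : ℕ} (a : Fin n → (x ⟶ m)) (b : Fin n → (m ⟶ x))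
    (hs : ∑ j, a j ≫ b j = 𝟙 x) :
    (tnu l m x a b).comp (tmu l m x) = LinearMap.id := by
  apply ATensor.hom_ext
  intro u t
  show ∑ j, ATensor.mk ℤ (End m) (m ⟶ x) (l ⟶ m) (b j) ((t ≫ u) ≫ a j)
      = ATensor.mk ℤ (End m) (m ⟶ x) (l ⟶ m) u t
  have step : ∀ j ∈ Finset.univ,
      ATensor.mk ℤ (End m) (m ⟶ x) (l ⟶ m) (b j) ((t ≫ u) ≫ a j)
        = (ATensor.mkBilin ℤ (End m) (m ⟶ x) (l ⟶ m)).flip t (u ≫ (a j ≫ b j)) := by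
    intro j _
    have h1 : (t ≫ u) ≫ a j = t ≫ (u ≫ a j) := Category.assoc _ _ _
    have h2 : u ≫ (a j ≫ b j) = (u ≫ a j) ≫ b j := (Category.assoc _ _ _).symm
    rw [h1, h2]
    exact (ATensor.mk_smul (k := ℤ) (A := End m) (M := (m ⟶ x)) (N := (l ⟶ m)) (b j) (u ≫ a j) t).symm
  rw [Finset.sum_congr rfl step, ← map_sum, ← Preadditive.comp_sum, hs, Category.comp_id]
  rfl

end Statement11Aux

section Statement11Aux2

universe w₁ w₂

variable {E : Type w₂} [Category.{w₁} E] [Preadditive E] [HasFiniteBiproducts E]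
  [HasBinaryBiproducts E]
variable (l m : E)

/-- An additive map between `ℤ`-modules is linear, for arbitrary `ℤ`-module structures. -/
def addHomToIntLin {M N : Type*} [AddCommGroup M] [AddCommGroup N]
    [iM : Module ℤ M] [iN : Module ℤ N] (f : M →+ N) : M →ₗ[ℤ] N where
  toFun := f
  map_add' := f.map_add
  map_smul' := fun c x => by
    haveI : Subsingleton (Module ℤ M) := (AddCommGroup.uniqueIntModule).instSubsingleton
    haveI : Subsingleton (Module ℤ N) := (AddCommGroup.uniqueIntModule).instSubsingleton
    rw [show iM = AddCommGroup.toIntModule M from Subsingleton.elim _ _,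
        show iN = AddCommGroup.toIntModule N from Subsingleton.elim _ _]
    exact map_zsmul f c x

/-- The component isomorphism `E(m,x) ⊗_B E(l,m) ≅ E(l,x)` in `ModuleCat ℤ`, for `x` a
direct summand of a finite direct sum of copies of `m`. -/
noncomputable def compIso (x : E) {n : ℕ} (a : Fin n → (x ⟶ m)) (b : Fin n → (m ⟶ x))
    (hs : ∑ j, a j ≫ b j = 𝟙 x) :
    (atensorFunctorL (End m) (l ⟶ m)).obj (ModuleCat.of ((End m)ᵐᵒᵖ) (m ⟶ x)) ≅
      (ModuleCat.restrictScalars (Int.castRingHom ((End l)ᵐᵒᵖ))).obj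
        (ModuleCat.of ((End l)ᵐᵒᵖ) (l ⟶ x)) where
  hom := by
    exact ConcreteCategory.ofHom <| addHomToIntLin
      (iN := ((ModuleCat.restrictScalars (Int.castRingHom ((End l)ᵐᵒᵖ))).obj
        (ModuleCat.of ((End l)ᵐᵒᵖ) (l ⟶ x))).isModule)
      (tmu l m x).toAddMonoidHom
  inv := by
    exact ConcreteCategory.ofHom <| addHomToIntLin
      (iM := ((ModuleCat.restrictScalars (Int.castRingHom ((End l)ᵐᵒᵖ))).obj
        (ModuleCat.of ((End l)ᵐᵒᵖ) (l ⟶ x))).isModule)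
      (tnu l m x a b).toAddMonoidHom
  hom_inv_id := by
    ext z
    exact LinearMap.congr_fun (tnu_tmu l m x a b hs) z
  inv_hom_id := by
    ext z
    exact tmu_tnu l m x a b hs z

lemma compIso_comm (x y : E) {n n' : ℕ}
    (a : Fin n → (x ⟶ m)) (b : Fin n → (m ⟶ x)) (hs : ∑ j, a j ≫ b j = 𝟙 x)
    (a' : Fin n' → (y ⟶ m)) (b' : Fin n' → (m ⟶ y)) (hs' : ∑ j, a' j ≫ b' j = 𝟙 y)
    (d : x ⟶ y)
    (φm : ModuleCat.of ((End m)ᵐᵒᵖ) (m ⟶ x) ⟶ ModuleCat.of ((End m)ᵐᵒᵖ) (m ⟶ y))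
    (φl : ModuleCat.of ((End l)ᵐᵒᵖ) (l ⟶ x) ⟶ ModuleCat.of ((End l)ᵐᵒᵖ) (l ⟶ y))
    (hφm : ∀ u : m ⟶ x, φm u = u ≫ d) (hφl : ∀ u : l ⟶ x, φl u = u ≫ d) :
    (compIso l m x a b hs).hom ≫
        (ModuleCat.restrictScalars (Int.castRingHom ((End l)ᵐᵒᵖ))).map φl
      = (atensorFunctorL (End m) (l ⟶ m)).map φm ≫ (compIso l m y a' b' hs').hom := by
  ext z
  obtain ⟨s, rfl⟩ := ATensor.mk_surjective_span z
  induction s using TensorProduct.induction_on with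
  | zero =>
      exact (map_zero _).trans (map_zero _).symm
  | tmul u t =>
      show φl.hom (t ≫ u) = t ≫ φm.hom u
      exact (hφl (t ≫ u)).trans ((Category.assoc _ _ _).trans (congrArg (t ≫ ·) (hφm u).symm))
  | add s₁ s₂ h₁ h₂ =>
      exact (map_add _ _ _).trans ((congrArg₂ (· + ·) h₁ h₂).trans (map_add _ _ _).symm)

variable {S : Frobenius E}

lemma sumFactor_of_proj (hmg : S.Good m) {x : E} (hx : S.IsProj x) :
    ∃ (n : ℕ) (a : Fin n → (x ⟶ m)) (b : Fin n → (m ⟶ x)), ∑ j, a j ≫ b j = 𝟙 x := by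
  obtain ⟨m', ⟨em⟩⟩ := hmg
  obtain ⟨n, s, t, hst⟩ := (S.proj_iff_add x).mp hx
  refine ⟨n, fun j => s ≫ biproduct.π _ j ≫ biprod.inr ≫ em.inv,
    fun j => em.hom ≫ biprod.snd ≫ biproduct.ι (fun _ : Fin n => S.r) j ≫ t, ?_⟩
  have key : ∀ j ∈ Finset.univ,
      (s ≫ biproduct.π (fun _ : Fin n => S.r) j ≫ biprod.inr ≫ em.inv) ≫
        (em.hom ≫ biprod.snd ≫ biproduct.ι (fun _ : Fin n => S.r) j ≫ t)
      = s ≫ (biproduct.π (fun _ : Fin n => S.r) j ≫ biproduct.ι (fun _ : Fin n => S.r) j) ≫ t := by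
    intro j _
    simp only [Category.assoc, Iso.inv_hom_id_assoc, biprod.inr_snd_assoc]
  rw [Finset.sum_congr rfl key]
  have expand : ∀ j ∈ Finset.univ,
      s ≫ (biproduct.π (fun _ : Fin n => S.r) j ≫ biproduct.ι (fun _ : Fin n => S.r) j) ≫ t
      = (s ≫ ((biproduct.π (fun _ : Fin n => S.r) j ≫ biproduct.ι (fun _ : Fin n => S.r) j) ≫ t)) :=
    fun j _ => rfl
  rw [Finset.sum_congr rfl expand, ← Preadditive.comp_sum, ← Preadditive.sum_comp,
    biproduct.total, Category.id_comp, hst]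

lemma sumFactor_self :
    ∃ (n : ℕ) (a : Fin n → (m ⟶ m)) (b : Fin n → (m ⟶ m)), ∑ j, a j ≫ b j = 𝟙 m := by
  refine ⟨1, fun _ => 𝟙 m, fun _ => 𝟙 m, ?_⟩
  simp

lemma sumFactor_biprod {x y : E}
    (hx : ∃ (n : ℕ) (a : Fin n → (x ⟶ m)) (b : Fin n → (m ⟶ x)), ∑ j, a j ≫ b j = 𝟙 x)
    (hy : ∃ (n : ℕ) (a : Fin n → (y ⟶ m)) (b : Fin n → (m ⟶ y)), ∑ j, a j ≫ b j = 𝟙 y) :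
    ∃ (n : ℕ) (a : Fin n → (x ⊞ y ⟶ m)) (b : Fin n → (m ⟶ x ⊞ y)),
      ∑ j, a j ≫ b j = 𝟙 (x ⊞ y) := by
  obtain ⟨n₁, a₁, b₁, h₁⟩ := hx
  obtain ⟨n₂, a₂, b₂, h₂⟩ := hy
  refine ⟨n₁ + n₂,
    Fin.addCases (fun j => biprod.fst ≫ a₁ j) (fun j => biprod.snd ≫ a₂ j),
    Fin.addCases (fun j => b₁ j ≫ biprod.inl) (fun j => b₂ j ≫ biprod.inr), ?_⟩
  rw [Fin.sum_univ_add]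
  have e₁ : ∀ j ∈ Finset.univ,
      (Fin.addCases (fun j => biprod.fst ≫ a₁ j) (fun j => biprod.snd ≫ a₂ j)
          (Fin.castAdd n₂ j)) ≫
        (Fin.addCases (fun j => b₁ j ≫ biprod.inl) (fun j => b₂ j ≫ biprod.inr)
          (Fin.castAdd n₂ j))
      = biprod.fst ≫ ((a₁ j ≫ b₁ j) ≫ biprod.inl) := by
    intro j _
    rw [Fin.addCases_left, Fin.addCases_left]
    simp only [Category.assoc]
  have e₂ : ∀ j ∈ Finset.univ,
      (Fin.addCases (fun j => biprod.fst ≫ a₁ j) (fun j => biprod.snd ≫ a₂ j)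
          (Fin.natAdd n₁ j)) ≫
        (Fin.addCases (fun j => b₁ j ≫ biprod.inl) (fun j => b₂ j ≫ biprod.inr)
          (Fin.natAdd n₁ j))
      = biprod.snd ≫ ((a₂ j ≫ b₂ j) ≫ biprod.inr) := by
    intro j _
    rw [Fin.addCases_right, Fin.addCases_right]
    simp only [Category.assoc]
  rw [Finset.sum_congr rfl e₁, Finset.sum_congr rfl e₂,
    ← Preadditive.comp_sum, ← Preadditive.comp_sum,
    ← Preadditive.sum_comp, ← Preadditive.sum_comp, h₁, h₂,
    Category.id_comp, Category.id_comp, biprod.total]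

variable (S)

/-- Every element of the projective ideal lifts along a deflation. -/
lemma projIdeal_factor (k : Type) [Field k] [CategoryTheory.Linear k E]
    {w y z : E} {p : y ⟶ z} (hdefl : S.IsDeflation p)
    {h : w ⟶ z} (hh : h ∈ S.projIdeal k w z) : ∃ u : w ⟶ y, u ≫ p = h := by
  induction hh using Submodule.span_induction with
  | mem x hx =>
      obtain ⟨P, g₀, h₀, hP, rfl⟩ := hx
      obtain ⟨w', hw'⟩ := hP p hdefl h₀
      exact ⟨g₀ ≫ w', by rw [Category.assoc, hw']⟩
  | zero => exact ⟨0, Limits.zero_comp⟩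
  | add x y hx hy ihx ihy =>
      obtain ⟨u, hu⟩ := ihx
      obtain ⟨v, hv⟩ := ihy
      exact ⟨u + v, by rw [Preadditive.add_comp, hu, hv]⟩
  | smul c x hx ihx =>
      obtain ⟨u, hu⟩ := ihx
      exact ⟨c • u, by rw [Linear.smul_comp, hu]⟩

lemma factor_mem_projIdeal (k : Type) [Field k] [CategoryTheory.Linear k E]
    {w y z : E} (hy : S.IsProj y) (u : w ⟶ y) (p : y ⟶ z) :
    u ≫ p ∈ S.projIdeal k w z :=
  Submodule.subset_span ⟨y, u, p, hy, rfl⟩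

/-- The class map `E(x,y) → C(x,y)` as a map of right `E(x,x)`-modules. -/
def Frobenius.toSLin (k : Type) [Field k] [CategoryTheory.Linear k E] (x y : E) :
    (x ⟶ y) →ₗ[(End x)ᵐᵒᵖ] S.SHom k x y where
  toFun := S.toS k
  map_add' u v := by
    show Submodule.Quotient.mk (u + v) = Submodule.Quotient.mk u + Submodule.Quotient.mk v
    rw [Submodule.Quotient.mk_add]
    rfl
  map_smul' a u := (S.preS_toS k (MulOpposite.unop a) u).symm

end Statement11Aux2

end Paper

set_option maxHeartbeats 1600000

open CategoryTheory Limits Paper in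
/-- **Statement 11** (Lemma 3.3).
In the setting of the paper (k-linear Frobenius category `E` with projectives `add r`,
stable category `C` 2-CY, Hom-finite, with split idempotents; `l, m` good maximal rigid
with `Σ²l ≅ l`, `Σ²m ≅ m`; conflations `0 → Ωm →g→ p₁ →f→ m → 0` and
`0 → m⊞p₃ →g'→ p₂ →f'→ Ωm → 0` with `p₁, p₂, p₃` projective), the object
`B̲ ⊗^L_B T` of `D(Aᵒᵖ)` — computed from the induced projective resolution
`Q_B : 0 → E(m,m⊞p₃) → E(m,p₂) → E(m,p₁) → E(m,m)` of `B̲` by tensoring with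
`T = E(l,m)` — is isomorphic to the complex
`0 → E(l,m⊞p₃) →g'∗→ E(l,p₂) →(gf')∗→ E(l,p₁) →f∗→ E(l,m)`
(homological degrees 3, 2, 1, 0), and its homology is `H₀ ≅ C(l,m)`, `H₁ ≅ C(l,Ωm)`,
and `Hᵢ = 0` for `i ≠ 0, 1`. -/
theorem statement_11
    (k : Type) [Field k] [IsAlgClosed k]
    (E : Type u) [Category.{v} E] [Preadditive E] [HasFiniteBiproducts E]
    [HasBinaryBiproducts E] [CategoryTheory.Linear k E]
    (S : Frobenius E) (T : TriData S k)
    (l m : E)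
    (hlg : S.Good l) (hmg : S.Good m)
    (hl : T.MaxRigid (SC.of S k l)) (hm : T.MaxRigid (SC.of S k m))
    (hsl : T.SuspSqFix (SC.of S k l)) (hsm : T.SuspSqFix (SC.of S k m))
    (Ωm p₁ p₂ p₃ : E)
    (hp₁ : S.IsProj p₁) (hp₂ : S.IsProj p₂) (hp₃ : S.IsProj p₃)
    (g : Ωm ⟶ p₁) (f : p₁ ⟶ m) (g' : m ⊞ p₃ ⟶ p₂) (f' : p₂ ⟶ Ωm)
    (hconf₁ : S.conf g f) (hconf₂ : S.conf g' f') :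
    -- the complex `Q_B ⊗_B T` (computing `B̲ ⊗^L_B T`) is isomorphic, as a complex of
    -- abelian groups, to the explicit complex `E(l, splice)` above
    Nonempty
      (((atensorFunctorL (End m) (l ⟶ m)).mapHomologicalComplex
          (ComplexShape.down ℕ)).obj
          (fourTermComplex m g f g' f' (S.conf_comp hconf₁) (S.conf_comp hconf₂)) ≅
        ((ModuleCat.restrictScalars.{v} (Int.castRingHom ((End l)ᵐᵒᵖ))).mapHomologicalComplex
          (ComplexShape.down ℕ)).obj
          (fourTermComplex l g f g' f' (S.conf_comp hconf₁) (S.conf_comp hconf₂))) ∧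
    -- `H₀ ≅ C(l,m)`
    Nonempty
      ((fourTermComplex l g f g' f' (S.conf_comp hconf₁) (S.conf_comp hconf₂)).homology 0
        ≅ ModuleCat.of ((End l)ᵐᵒᵖ) (S.SHom k l m)) ∧
    -- `H₁ ≅ C(l, Ωm)`
    Nonempty
      ((fourTermComplex l g f g' f' (S.conf_comp hconf₁) (S.conf_comp hconf₂)).homology 1
        ≅ ModuleCat.of ((End l)ᵐᵒᵖ) (S.SHom k l Ωm)) ∧
    -- `Hᵢ = 0` otherwise
    (∀ i : ℕ, 2 ≤ i →
      IsZero ((fourTermComplex l g f g' f'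
        (S.conf_comp hconf₁) (S.conf_comp hconf₂)).homology i)) := by
  obtain ⟨hk1⟩ := S.conf_isKernel hconf₁
  obtain ⟨hk2⟩ := S.conf_isKernel hconf₂
  have gmono : ∀ {c : E} (a b : c ⟶ Ωm), a ≫ g = b ≫ g → a = b :=
    fun a b hab => Fork.IsLimit.hom_ext hk1 hab
  have g'mono : ∀ {c : E} (a b : c ⟶ m ⊞ p₃), a ≫ g' = b ≫ g' → a = b :=
    fun a b hab => Fork.IsLimit.hom_ext hk2 hab
  have fdefl : S.IsDeflation f := ⟨_, _, hconf₁⟩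
  have f'defl : S.IsDeflation f' := ⟨_, _, hconf₂⟩
  set Kl := fourTermComplex l g f g' f' (S.conf_comp hconf₁) (S.conf_comp hconf₂) with hKldef
  set Km := fourTermComplex m g f g' f' (S.conf_comp hconf₁) (S.conf_comp hconf₂) with hKmdef
  have dl10 : Kl.d 1 0 = ModuleCat.ofHom (postcompL f) := rfl
  have dl21 : Kl.d 2 1 = ModuleCat.ofHom (postcompL (f' ≫ g)) := rfl
  have dl32 : Kl.d 3 2 = ModuleCat.ofHom (postcompL g') := rfl
  have dm10 : Km.d 1 0 = ModuleCat.ofHom (postcompL f) := rfl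
  have dm21 : Km.d 2 1 = ModuleCat.ofHom (postcompL (f' ≫ g)) := rfl
  have dm32 : Km.d 3 2 = ModuleCat.ofHom (postcompL g') := rfl
  refine ⟨?_, ?_, ?_, ?_⟩
  · -- the isomorphism of complexes
    obtain ⟨n₀, a₀, b₀, hs₀⟩ := sumFactor_self m
    obtain ⟨n₁, a₁, b₁, hs₁⟩ := sumFactor_of_proj m hmg hp₁
    obtain ⟨n₂, a₂, b₂, hs₂⟩ := sumFactor_of_proj m hmg hp₂
    obtain ⟨n₃, a₃, b₃, hs₃⟩ := sumFactor_biprod m (sumFactor_self m) (sumFactor_of_proj m hmg hp₃)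
    refine ⟨HomologicalComplex.Hom.isoOfComponents
      (fun i => match i with
        | 0 => compIso l m m a₀ b₀ hs₀
        | 1 => compIso l m p₁ a₁ b₁ hs₁
        | 2 => compIso l m p₂ a₂ b₂ hs₂
        | 3 => compIso l m (m ⊞ p₃) a₃ b₃ hs₃
        | (j+4) => modSubsingletonIso
            (fun a b => ATensor.eq_of_subsingleton
              (fun p q => Subsingleton.elim (α := PUnit) p q) a b)
            (fun a b => Subsingleton.elim (α := PUnit) a b))
      ?_⟩
    intro i j hij
    obtain rfl : j + 1 = i := hij
    simp only [Functor.mapHomologicalComplex_obj_d]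
    match j with
    | 0 =>
        exact compIso_comm l m p₁ m a₁ b₁ hs₁ a₀ b₀ hs₀ f (Km.d 1 0) (Kl.d 1 0)
          (fun u => by rw [dm10]; try rfl) (fun u => by rw [dl10]; try rfl)
    | 1 =>
        exact compIso_comm l m p₂ p₁ a₂ b₂ hs₂ a₁ b₁ hs₁ (f' ≫ g) (Km.d 2 1) (Kl.d 2 1)
          (fun u => by rw [dm21]; try rfl) (fun u => by rw [dl21]; try rfl)
    | 2 =>
        exact compIso_comm l m (m ⊞ p₃) p₂ a₃ b₃ hs₃ a₂ b₂ hs₂ g' (Km.d 3 2) (Kl.d 3 2)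
          (fun u => by rw [dm32]; try rfl) (fun u => by rw [dl32]; try rfl)
    | (j+3) =>
        have hm0 : Km.d (j+3+1) (j+3) = 0 := by
          dsimp only [Km, fourTermComplex]
          exact ChainComplex.of_d _ _ (j+3)
        have hl0 : Kl.d (j+3+1) (j+3) = 0 := by
          dsimp only [Kl, fourTermComplex]
          exact ChainComplex.of_d _ _ (j+3)
        rw [hm0, hl0, Functor.map_zero, Functor.map_zero]
        exact Limits.comp_zero.trans Limits.zero_comp.symm
  · -- H₀ ≅ C(l,m)
    have hprev0 : (ComplexShape.down ℕ).prev 0 = 1 :=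
      (ComplexShape.down ℕ).prev_eq' (by simp)
    have hnext0 : (ComplexShape.down ℕ).next 0 = 0 := ChainComplex.next_nat_zero
    have hg00 : Kl.d 0 0 = 0 := Kl.shape 0 0 (by simp)
    have hker : ∀ h : l ⟶ m, (Kl.sc' 1 0 0).g h = 0 := by
      intro h
      show Kl.d 0 0 h = 0
      rw [hg00]
      rfl
    refine ⟨(Kl.homologyIsoSc' 1 0 0 hprev0 hnext0) ≪≫
      (Kl.sc' 1 0 0).moduleCatHomologyIso ≪≫ (LinearEquiv.toModuleIso ?_)⟩
    refine LinearEquiv.ofBijective (Submodule.liftQ _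
      ((S.toSLin k l m).comp (LinearMap.ker (Kl.sc' 1 0 0).g.hom).subtype) ?_) ⟨?_, ?_⟩
    · -- the lift is well defined
      intro q hq
      obtain ⟨w, rfl⟩ := LinearMap.mem_range.mp hq
      rw [LinearMap.mem_ker]
      show S.toS k (((Kl.sc' 1 0 0).moduleCatToCycles w).1 : l ⟶ m) = 0
      have hval : (((Kl.sc' 1 0 0).moduleCatToCycles w).1 : l ⟶ m) = w ≫ f := by
        show Kl.d 1 0 w = w ≫ f
        rw [dl10]
        rfl
      rw [hval]
      show Submodule.Quotient.mk (w ≫ f) = 0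
      rw [Submodule.Quotient.mk_eq_zero]
      exact factor_mem_projIdeal S k hp₁ w f
    · -- injectivity
      rw [injective_iff_map_eq_zero]
      intro q hq0
      obtain ⟨u, rfl⟩ := Submodule.Quotient.mk_surjective _ q
      have hmem : (u.1 : l ⟶ m) ∈ S.projIdeal k l m := by
        exact (Submodule.Quotient.mk_eq_zero (S.projIdeal k l m)).mp hq0
      obtain ⟨w, hw⟩ := projIdeal_factor S k fdefl hmem
      rw [Submodule.Quotient.mk_eq_zero]
      refine LinearMap.mem_range.mpr ⟨w, ?_⟩
      apply Subtype.ext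
      show Kl.d 1 0 w = (u.1 : l ⟶ m)
      rw [dl10]
      exact hw
    · -- surjectivity
      intro s
      obtain ⟨h, rfl⟩ := S.toS_surjective k l m s
      exact ⟨Submodule.Quotient.mk ⟨h, LinearMap.mem_ker.mpr (hker h)⟩, rfl⟩
  · -- H₁ ≅ C(l,Ωm)
    have hprev1 : (ComplexShape.down ℕ).prev 1 = 2 :=
      (ComplexShape.down ℕ).prev_eq' (by simp)
    have hnext1 : (ComplexShape.down ℕ).next 1 = 0 :=
      (ComplexShape.down ℕ).next_eq' (by simp)
    have hex : ∀ u : LinearMap.ker (Kl.sc' 2 1 0).g.hom, ∃ v : l ⟶ Ωm, v ≫ g = (u.1 : l ⟶ p₁) := by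
      intro u
      have hu0 : (u.1 : l ⟶ p₁) ≫ f = 0 := by
        have hp := u.property
        rw [LinearMap.mem_ker] at hp
        have hp' : Kl.d 1 0 (u.1 : l ⟶ p₁) = 0 := hp
        rw [dl10] at hp'
        exact hp'
      obtain ⟨v, hv⟩ := KernelFork.IsLimit.lift' hk1 (u.1 : l ⟶ p₁) hu0
      exact ⟨v, hv⟩
    choose lft hlft using hex
    refine ⟨(Kl.homologyIsoSc' 2 1 0 hprev1 hnext1) ≪≫
      (Kl.sc' 2 1 0).moduleCatHomologyIso ≪≫ (LinearEquiv.toModuleIso ?_)⟩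
    refine LinearEquiv.ofBijective (Submodule.liftQ _
      ({ toFun := fun u => S.toS k (lft u)
         map_add' := ?_
         map_smul' := ?_ }) ?_) ⟨?_, ?_⟩
    · -- additivity
      intro u v
      have h1 : lft (u + v) = lft u + lft v := by
        apply gmono
        rw [hlft (u + v), Preadditive.add_comp, hlft u, hlft v]
        rfl
      rw [h1]
      exact map_add (S.toSLin k l Ωm) _ _
    · -- linearity over (End l)ᵐᵒᵖ
      intro a u
      have h1 : lft (a • u) = MulOpposite.unop a ≫ lft u := by
        apply gmono
        rw [hlft (a • u), Category.assoc, hlft u]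
        rfl
      rw [h1]
      exact (S.preS_toS k (MulOpposite.unop a) (lft u)).symm
    · -- well defined on the quotient
      intro q hq
      obtain ⟨w, rfl⟩ := LinearMap.mem_range.mp hq
      rw [LinearMap.mem_ker]
      show S.toS k (lft ((Kl.sc' 2 1 0).moduleCatToCycles w)) = 0
      have h1 : lft ((Kl.sc' 2 1 0).moduleCatToCycles w) = w ≫ f' := by
        apply gmono
        rw [hlft]
        show Kl.d 2 1 w = (w ≫ f') ≫ g
        rw [dl21]
        show w ≫ (f' ≫ g) = (w ≫ f') ≫ g
        exact (Category.assoc _ _ _).symm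
      rw [h1]
      show Submodule.Quotient.mk (w ≫ f') = 0
      rw [Submodule.Quotient.mk_eq_zero]
      exact factor_mem_projIdeal S k hp₂ w f'
    · -- injectivity
      rw [injective_iff_map_eq_zero]
      intro q hq0
      obtain ⟨u, rfl⟩ := Submodule.Quotient.mk_surjective _ q
      have hmem : lft u ∈ S.projIdeal k l Ωm := by
        rw [← Submodule.Quotient.mk_eq_zero (S.projIdeal k l Ωm)]
        exact hq0
      obtain ⟨w, hw⟩ := projIdeal_factor S k f'defl hmem
      rw [Submodule.Quotient.mk_eq_zero]
      refine LinearMap.mem_range.mpr ⟨w, ?_⟩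
      apply Subtype.ext
      show Kl.d 2 1 w = (u.1 : l ⟶ p₁)
      rw [dl21]
      show w ≫ (f' ≫ g) = (u.1 : l ⟶ p₁)
      rw [← Category.assoc, hw, hlft u]
    · -- surjectivity
      intro s
      obtain ⟨v, rfl⟩ := S.toS_surjective k l Ωm s
      have hmem : (v ≫ g) ∈ LinearMap.ker (Kl.sc' 2 1 0).g.hom := by
        apply (LinearMap.mem_ker (f := (Kl.sc' 2 1 0).g.hom)).mpr
        show Kl.d 1 0 (v ≫ g) = 0
        rw [dl10]
        show (v ≫ g) ≫ f = 0
        rw [Category.assoc, S.conf_comp hconf₁, Limits.comp_zero]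
      refine ⟨Submodule.Quotient.mk ⟨v ≫ g, hmem⟩, ?_⟩
      show S.toS k (lft ⟨v ≫ g, hmem⟩) = S.toS k v
      have h1 : lft ⟨v ≫ g, hmem⟩ = v := by
        apply gmono
        rw [hlft]
      rw [h1]
  · -- vanishing of higher homology
    intro i hi
    rw [← HomologicalComplex.exactAt_iff_isZero_homology]
    rcases i with _|_|_|_|i
    · omega
    · omega
    · -- i = 2
      rw [Kl.exactAt_iff' (i := 3) (j := 2) (k := 1)
        ((ComplexShape.down ℕ).prev_eq' (by simp)) ((ComplexShape.down ℕ).next_eq' (by simp)),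
        ShortComplex.moduleCat_exact_iff]
      intro u hu
      have hu' : Kl.d 2 1 u = 0 := hu
      rw [dl21] at hu'
      have h1 : (u ≫ f') ≫ g = 0 ≫ g := by
        exact (Category.assoc _ _ _).trans (hu'.trans Limits.zero_comp.symm)
      have h2 : u ≫ f' = 0 := gmono _ _ h1
      obtain ⟨w, hw⟩ := KernelFork.IsLimit.lift' hk2 u h2
      refine ⟨w, ?_⟩
      show Kl.d 3 2 w = u
      rw [dl32]
      exact hw
    · -- i = 3
      rw [Kl.exactAt_iff' (i := 4) (j := 3) (k := 2)
        ((ComplexShape.down ℕ).prev_eq' (by simp)) ((ComplexShape.down ℕ).next_eq' (by simp)),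
        ShortComplex.moduleCat_exact_iff]
      intro u hu
      have hu' : Kl.d 3 2 u = 0 := hu
      rw [dl32] at hu'
      have h2 : u = 0 := g'mono _ _ (by exact hu'.trans Limits.zero_comp.symm)
      refine ⟨0, ?_⟩
      rw [map_zero, h2]
    · -- i ≥ 4
      rw [Kl.exactAt_iff' (i := i+5) (j := i+4) (k := i+3)
        ((ComplexShape.down ℕ).prev_eq' (by simp)) ((ComplexShape.down ℕ).next_eq' (by simp)),
        ShortComplex.moduleCat_exact_iff]
      intro u hu
      exact ⟨0, Subsingleton.elim (α := PUnit) _ _⟩
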